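/- Let Q be an r×r real matrix, U a v×r real matrix and V an r×v real matrix with U·V = I_v. If V·U·exp(tQ)·V = exp(tQ)·V for all real t, then V·U·Q·V = Q·V. -/

import Mathlib

open NormedSpace in
theorem lumpable_semigroup_implies_lumpable_generator (r v : ℕ)
    (Q : Matrix (Fin r) (Fin r) ℝ) (U : Matrix (Fin v) (Fin r) ℝ)
    (V : Matrix (Fin r) (Fin v) ℝ)
    (hUV : U * V = 1)
    (hP : ∀ t : ℝ, V * U * exp (t • Q) * V = exp (t • Q) * V) :
    V * U * Q * V = Q * V := by
  letI := Matrix.linftyOpNormedRing (n := Fin r) (α := ℝ)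
  letI := Matrix.linftyOpNormedAlgebra (n := Fin r) (R := ℝ) (α := ℝ)
  letI := Matrix.linftyOpNormedAddCommGroup (m := Fin r) (n := Fin v) (α := ℝ)
  letI := Matrix.linftyOpNormedSpace (R := ℝ) (m := Fin r) (n := Fin v) (α := ℝ)
  have hexp : HasDerivAt (fun t : ℝ => exp (t • Q)) (exp ((0:ℝ) • Q) * Q) 0 :=
    hasDerivAt_exp_smul_const Q 0
  have h0 : exp ((0:ℝ) • Q) = 1 := by rw [zero_smul, exp_zero]
  rw [h0, one_mul] at hexp
  let L : Matrix (Fin r) (Fin r) ℝ →ₗ[ℝ] Matrix (Fin r) (Fin v) ℝ :=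
    { toFun := fun A => V * U * A * V
      map_add' := by intros; simp [Matrix.mul_add, Matrix.add_mul]
      map_smul' := by intros; simp [Matrix.mul_smul, Matrix.smul_mul] }
  let R : Matrix (Fin r) (Fin r) ℝ →ₗ[ℝ] Matrix (Fin r) (Fin v) ℝ :=
    { toFun := fun A => A * V
      map_add' := by intros; simp [Matrix.add_mul]
      map_smul' := by intros; simp [Matrix.smul_mul] }
  have hL : HasDerivAt (fun t : ℝ => V * U * exp (t • Q) * V) (V * U * Q * V) 0 := by
    have := (L.toContinuousLinearMap.hasFDerivAt.comp_hasDerivAt 0 hexp)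
    exact this
  have hR : HasDerivAt (fun t : ℝ => exp (t • Q) * V) (Q * V) 0 := by
    have := (R.toContinuousLinearMap.hasFDerivAt.comp_hasDerivAt 0 hexp)
    exact this
  have heq : (fun t : ℝ => V * U * exp (t • Q) * V) = fun t : ℝ => exp (t • Q) * V :=
    funext hP
  rw [heq] at hL
  exact hL.unique hR
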